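/- The hexagonal lattice spanned by 1 and e^{iπ/3} in ℂ ≅ ℝ², rescaled to covolume 1, has strictly larger systole than any non-hexagonal covolume-1 lattice in ℝ²; equivalently, every covolume-1 lattice Λ ⊂ ℝ² satisfies syst(Λ) ≤ (2/√3)^{1/2}, with equality iff Λ is the image of the rescaled hexagonal lattice under an isometry of ℝ². -/

import Mathlib

open Complex

/-- The lattice in ℂ ≅ ℝ² generated by `a` and `b`. -/
noncomputable def latticeOf (a b : ℂ) : AddSubgroup ℂ := AddSubgroup.closure {a, b}

/-- The covolume of the lattice generated by `a` and `b`: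
the area of the fundamental parallelogram. -/
noncomputable def covol (a b : ℂ) : ℝ := |((starRingEnd ℂ) a * b).im|

/-- The systole of a lattice in ℂ: the infimum of the norms of its
nonzero elements. -/
noncomputable def systole (L : AddSubgroup ℂ) : ℝ :=
  sInf {r | ∃ v ∈ L, v ≠ 0 ∧ ‖v‖ = r}

/-- A minimal vector of a lattice: a nonzero vector realizing the systole. -/
def IsMinimalVector (L : AddSubgroup ℂ) (v : ℂ) : Prop :=
  v ∈ L ∧ v ≠ 0 ∧ ‖v‖ = systole L

/-- The scaling factor (2/√3)^{1/2} making the hexagonal lattice have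
covolume one. -/
noncomputable def c₀ : ℝ := Real.sqrt (2 / Real.sqrt 3)

/-- The hexagonal lattice `ℤ + ℤ e^{iπ/3}` rescaled to covolume one. -/
noncomputable def hexLattice : AddSubgroup ℂ :=
  latticeOf c₀ (c₀ * Complex.exp (Real.pi / 3 * Complex.I))

/-- A lattice in ℂ ≅ ℝ² is hexagonal if it is the image of the rescaled
hexagonal lattice under a (linear) isometry of ℝ². -/
def IsHexagonal (L : AddSubgroup ℂ) : Prop :=
  ∃ f : ℂ ≃ₗᵢ[ℝ] ℂ, (L : Set ℂ) = f '' (hexLattice : Set ℂ)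

/-! ### pairing functions -/


def pd (u v : ℂ) : ℝ := u.re * v.im - u.im * v.re
def pp (u v : ℂ) : ℝ := u.re * v.re + u.im * v.im

lemma covol_eq (a b : ℂ) : covol a b = |pd a b| := by
  unfold covol pd
  congr 1
  simp [Complex.mul_im]
  ring

lemma pp_sq_add_pd_sq (u v : ℂ) : pp u v ^ 2 + pd u v ^ 2 = normSq u * normSq v := by
  simp [pp, pd, normSq_apply]; ring

lemma norm_sq_eq (v : ℂ) : ‖v‖ ^ 2 = normSq v := by
  rw [Complex.sq_norm]

lemma norm_eq_sqrt (v : ℂ) : ‖v‖ = Real.sqrt (normSq v) := by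
  rw [Complex.norm_def]

lemma abs_pd_le (u v : ℂ) : |pd u v| ≤ ‖u‖ * ‖v‖ := by
  have h1 : pd u v ^ 2 ≤ (‖u‖ * ‖v‖) ^ 2 := by
    rw [mul_pow, norm_sq_eq, norm_sq_eq]
    nlinarith [sq_nonneg (pp u v), pp_sq_add_pd_sq u v]
  have := Real.sqrt_le_sqrt h1
  rwa [Real.sqrt_sq_eq_abs, Real.sqrt_sq (by positivity)] at this

/-! ### membership and bases -/

lemma mem_latticeOf {a b v : ℂ} :
    v ∈ latticeOf a b ↔ ∃ m n : ℤ, v = (m : ℂ) * a + (n : ℂ) * b := by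
  rw [latticeOf, AddSubgroup.mem_closure_pair]
  constructor
  · rintro ⟨m, n, rfl⟩; exact ⟨m, n, by simp [zsmul_eq_mul]⟩
  · rintro ⟨m, n, rfl⟩; exact ⟨m, n, by simp [zsmul_eq_mul]⟩

def IsZBasis (L : AddSubgroup ℂ) (u w : ℂ) : Prop :=
  ∀ v, v ∈ L ↔ ∃ m n : ℤ, v = (m : ℂ) * u + (n : ℂ) * w

lemma isZBasis_latticeOf (a b : ℂ) : IsZBasis (latticeOf a b) a b :=
  fun _ => mem_latticeOf

lemma IsZBasis.change {L : AddSubgroup ℂ} {u w u' w' : ℂ} (h : IsZBasis L u w)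
    {p q r s ε : ℤ} (hdet : p * s - q * r = ε) (hε : ε = 1 ∨ ε = -1)
    (hu' : u' = (p : ℂ) * u + (q : ℂ) * w) (hw' : w' = (r : ℂ) * u + (s : ℂ) * w) :
    IsZBasis L u' w' := by
  have hε2 : (ε : ℤ) * ε = 1 := by rcases hε with h1 | h1 <;> simp [h1]
  intro v
  rw [h v]
  constructor
  · rintro ⟨m, n, rfl⟩
    refine ⟨ε * (m * s - n * r), ε * (n * p - m * q), ?_⟩
    subst hu' hw'
    have hd : ((p : ℂ) * s - q * r) = (ε : ℂ) := by exact_mod_cast congrArg (Int.cast : ℤ → ℂ) hdet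
    have he : ((ε : ℂ)) * ε = 1 := by exact_mod_cast congrArg (Int.cast : ℤ → ℂ) hε2
    push_cast
    linear_combination (-(ε:ℂ) * m * u - (ε:ℂ) * n * w) * hd + (-(m:ℂ) * u - (n:ℂ) * w) * he
  · rintro ⟨m, n, rfl⟩
    refine ⟨m * p + n * r, m * q + n * s, ?_⟩
    subst hu' hw'
    push_cast
    ring

lemma systole_eq_of_min {L : AddSubgroup ℂ} {v : ℂ} (hv : v ∈ L) (hv0 : v ≠ 0)
    (hmin : ∀ w ∈ L, w ≠ 0 → ‖v‖ ≤ ‖w‖) : systole L = ‖v‖ := by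
  apply le_antisymm
  · exact csInf_le ⟨0, fun r ⟨w, _, _, hr⟩ => hr ▸ norm_nonneg w⟩ ⟨v, hv, hv0, rfl⟩
  · exact le_csInf ⟨‖v‖, v, hv, hv0, rfl⟩ (by rintro r ⟨w, hw, hw0, rfl⟩; exact hmin w hw hw0)
/-! ### bilinearity computations -/

lemma pd_comb (a b : ℂ) (p q r s : ℤ) :
    pd ((p:ℂ) * a + (q:ℂ) * b) ((r:ℂ) * a + (s:ℂ) * b) = (p * s - q * r : ℤ) * pd a b := by
  simp only [pd, Complex.add_re, Complex.add_im, Complex.mul_re, Complex.mul_im,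
    Complex.intCast_re, Complex.intCast_im]
  push_cast
  ring

lemma pd_left (a b : ℂ) (m n : ℤ) :
    pd a ((m:ℂ) * a + (n:ℂ) * b) = (n : ℝ) * pd a b := by
  simp only [pd, Complex.add_re, Complex.add_im, Complex.mul_re, Complex.mul_im,
    Complex.intCast_re, Complex.intCast_im]
  ring

lemma pd_right (a b : ℂ) (m n : ℤ) :
    pd b ((m:ℂ) * a + (n:ℂ) * b) = -((m : ℝ) * pd a b) := by
  simp only [pd, Complex.add_re, Complex.add_im, Complex.mul_re, Complex.mul_im,
    Complex.intCast_re, Complex.intCast_im]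
  ring

lemma pp_self (u : ℂ) : pp u u = normSq u := by simp [pp, normSq_apply]

lemma pp_sub_int (u w : ℂ) (k : ℤ) :
    pp u (w - (k:ℂ) * u) = pp u w - (k : ℝ) * normSq u := by
  simp only [pp, normSq_apply, Complex.sub_re, Complex.sub_im, Complex.mul_re, Complex.mul_im,
    Complex.intCast_re, Complex.intCast_im]
  ring

lemma pd_sub_int (u w : ℂ) (k : ℤ) : pd u (w - (k:ℂ) * u) = pd u w := by
  simp only [pd, Complex.sub_re, Complex.sub_im, Complex.mul_re, Complex.mul_im,
    Complex.intCast_re, Complex.intCast_im]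
  ring

/-- reconstruction: `normSq u • v = u * ⟨pp u v, pd u v⟩`. -/
lemma recon (u v : ℂ) : (normSq u : ℂ) * v = u * Complex.mk (pp u v) (pd u v) := by
  apply Complex.ext <;>
    simp only [pp, pd, normSq_apply, Complex.mul_re, Complex.mul_im, Complex.ofReal_re,
      Complex.ofReal_im] <;> ring

/-- combinations vanish only trivially when `pd a b ≠ 0` -/
lemma comb_eq_zero {a b : ℂ} (hab : pd a b ≠ 0) {m n : ℤ}
    (h : (m:ℂ) * a + (n:ℂ) * b = 0) : m = 0 ∧ n = 0 := by
  have h1 : pd a ((m:ℂ) * a + (n:ℂ) * b) = 0 := by rw [h]; simp [pd]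
  have h2 : pd b ((m:ℂ) * a + (n:ℂ) * b) = 0 := by rw [h]; simp [pd]
  rw [pd_left] at h1
  rw [pd_right] at h2
  constructor
  · have := mul_eq_zero.1 (neg_eq_zero.1 h2)
    rcases this with h | h
    · exact_mod_cast h
    · exact absurd h hab
  · rcases mul_eq_zero.1 h1 with h | h
    · exact_mod_cast h
    · exact absurd h hab
/-! ### existence of a minimal vector -/

lemma exists_min_vec {a b : ℂ} (hpd : |pd a b| = 1) :
    ∃ u ∈ latticeOf a b, u ≠ 0 ∧ ∀ w ∈ latticeOf a b, w ≠ 0 → ‖u‖ ≤ ‖w‖ := by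
  have hab0 : pd a b ≠ 0 := by intro h; rw [h] at hpd; simp at hpd
  have hab1 : (1:ℝ) ≤ ‖a‖ * ‖b‖ := hpd ▸ abs_pd_le a b
  set M : ℤ := ⌈‖a‖ * ‖a‖ + ‖b‖ * ‖a‖⌉ with hMdef
  have hMreal : ‖a‖ * ‖a‖ + ‖b‖ * ‖a‖ ≤ (M : ℝ) := Int.le_ceil _
  have hMa : ‖a‖ * ‖a‖ ≤ (M : ℝ) := by nlinarith [norm_nonneg a, norm_nonneg b]
  have hMb : ‖b‖ * ‖a‖ ≤ (M : ℝ) := by nlinarith [norm_nonneg a, norm_nonneg b]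
  have ha0 : a ≠ 0 := by
    intro h; apply hab0; simp [pd, h]
  have hM1 : 1 ≤ M := by
    have : (1:ℝ) ≤ (M:ℝ) := by
      calc (1:ℝ) ≤ ‖a‖ * ‖b‖ := hab1
      _ = ‖b‖ * ‖a‖ := mul_comm _ _
      _ ≤ M := hMb
    exact_mod_cast this
  set S : Finset (ℤ × ℤ) := ((Finset.Icc (-M) M) ×ˢ (Finset.Icc (-M) M)).erase (0,0) with hSdef
  have hS10 : ((1,0) : ℤ × ℤ) ∈ S := by
    simp only [hSdef, Finset.mem_erase, Finset.mem_product, Finset.mem_Icc]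
    refine ⟨by simp, ⟨by omega, by omega⟩, by omega, by omega⟩
  obtain ⟨p₀, hp₀, hminS⟩ :=
    S.exists_min_image (fun p => ‖(p.1:ℂ) * a + (p.2:ℂ) * b‖) ⟨(1,0), hS10⟩
  obtain ⟨m₀, n₀⟩ := p₀
  have hp₀ne : (m₀, n₀) ≠ ((0 : ℤ), (0 : ℤ)) := (Finset.mem_erase.1 hp₀).1
  refine ⟨(m₀:ℂ) * a + (n₀:ℂ) * b, mem_latticeOf.2 ⟨m₀, n₀, rfl⟩, ?_, ?_⟩
  · intro h
    obtain ⟨hm, hn⟩ := comb_eq_zero hab0 h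
    exact hp₀ne (by simp [hm, hn])
  · have hua : ‖(m₀:ℂ) * a + (n₀:ℂ) * b‖ ≤ ‖a‖ := by
      have := hminS (1,0) hS10
      simpa using this
    intro w hw hw0
    obtain ⟨m, n, rfl⟩ := mem_latticeOf.1 hw
    rcases le_or_gt ‖a‖ ‖(m:ℂ) * a + (n:ℂ) * b‖ with h | h
    · exact le_trans hua h
    · -- the point is in S
      have hwle : ‖(m:ℂ) * a + (n:ℂ) * b‖ ≤ ‖a‖ := h.le
      set w := (m:ℂ) * a + (n:ℂ) * b with hwdef
      have hn' : |(n:ℝ)| ≤ (M:ℝ) := by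
        have h1 : |pd a w| ≤ ‖a‖ * ‖w‖ := abs_pd_le a w
        rw [hwdef, pd_left, abs_mul, hpd, mul_one] at h1
        calc |(n:ℝ)| ≤ ‖a‖ * ‖w‖ := h1
        _ ≤ ‖a‖ * ‖a‖ := by nlinarith [norm_nonneg a]
        _ ≤ M := hMa
      have hm' : |(m:ℝ)| ≤ (M:ℝ) := by
        have h1 : |pd b w| ≤ ‖b‖ * ‖w‖ := abs_pd_le b w
        rw [hwdef, pd_right, abs_neg, abs_mul, hpd, mul_one] at h1
        calc |(m:ℝ)| ≤ ‖b‖ * ‖w‖ := h1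
        _ ≤ ‖b‖ * ‖a‖ := by nlinarith [norm_nonneg b]
        _ ≤ M := hMb
      have hnZ : |n| ≤ M := by exact_mod_cast (by push_cast; exact hn' : (|n| : ℝ) ≤ (M:ℝ))
      have hmZ : |m| ≤ M := by exact_mod_cast (by push_cast; exact hm' : (|m| : ℝ) ≤ (M:ℝ))
      obtain ⟨hm1, hm2⟩ := abs_le.1 hmZ
      obtain ⟨hn1, hn2⟩ := abs_le.1 hnZ
      have hmem : ((m, n) : ℤ × ℤ) ∈ S := by
        simp only [hSdef, Finset.mem_erase, Finset.mem_product, Finset.mem_Icc]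
        refine ⟨?_, ⟨hm1, hm2⟩, hn1, hn2⟩
        intro hc
        apply hw0
        have hm0 : m = 0 := by exact congrArg Prod.fst hc
        have hn0 : n = 0 := by exact congrArg Prod.snd hc
        simp [hwdef, hm0, hn0]
      exact hminS (m, n) hmem
/-! ### a minimal vector extends to a basis -/

lemma exists_basis_with_min {a b : ℂ} (hpd : |pd a b| = 1) {u : ℂ}
    (hu : u ∈ latticeOf a b) (hu0 : u ≠ 0)
    (hmin : ∀ w ∈ latticeOf a b, w ≠ 0 → ‖u‖ ≤ ‖w‖) :
    ∃ w ∈ latticeOf a b, IsZBasis (latticeOf a b) u w ∧ |pd u w| = 1 := by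
  obtain ⟨p, q, hu_eq⟩ := mem_latticeOf.1 hu
  -- the gcd of p and q is 1
  obtain ⟨p', hp'⟩ : ((Int.gcd p q : ℤ)) ∣ p := Int.gcd_dvd_left p q
  obtain ⟨q', hq'⟩ : ((Int.gcd p q : ℤ)) ∣ q := Int.gcd_dvd_right p q
  have hg0 : Int.gcd p q ≠ 0 := by
    intro h
    rw [Int.gcd_eq_zero_iff] at h
    apply hu0
    rw [hu_eq, h.1, h.2]; simp
  have hu'mem : (p':ℂ) * a + (q':ℂ) * b ∈ latticeOf a b := mem_latticeOf.2 ⟨p', q', rfl⟩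
  have cp : (p:ℂ) = ((Int.gcd p q : ℤ):ℂ) * (p':ℂ) := by exact_mod_cast hp'
  have cq : (q:ℂ) = ((Int.gcd p q : ℤ):ℂ) * (q':ℂ) := by exact_mod_cast hq'
  have hu'fac : u = ((Int.gcd p q : ℤ) : ℂ) * ((p':ℂ) * a + (q':ℂ) * b) := by
    rw [hu_eq, cp, cq]; ring
  have hu'0 : (p':ℂ) * a + (q':ℂ) * b ≠ 0 := by
    intro h; apply hu0; rw [hu'fac, h, mul_zero]
  have hle : ‖u‖ ≤ ‖(p':ℂ) * a + (q':ℂ) * b‖ := hmin _ hu'mem hu'0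
  have hg1 : Int.gcd p q = 1 := by
    by_contra hne
    have hg2 : 2 ≤ (Int.gcd p q : ℝ) := by
      have : 2 ≤ Int.gcd p q := by omega
      exact_mod_cast this
    have hnorm : ‖u‖ = (Int.gcd p q : ℝ) * ‖(p':ℂ) * a + (q':ℂ) * b‖ := by
      rw [hu'fac, norm_mul]
      congr 1
      rw [Complex.norm_intCast]
      simp
    have hpos : 0 < ‖(p':ℂ) * a + (q':ℂ) * b‖ := norm_pos_iff.2 hu'0
    rw [hnorm] at hle
    nlinarith
  -- Bezout
  have hbez := Int.gcd_eq_gcd_ab p q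
  rw [hg1] at hbez
  set A := Int.gcdA p q
  set B := Int.gcdB p q
  refine ⟨((-B : ℤ):ℂ) * a + ((A : ℤ):ℂ) * b, mem_latticeOf.2 ⟨-B, A, rfl⟩, ?_, ?_⟩
  · exact (isZBasis_latticeOf a b).change (p := p) (q := q) (r := -B) (s := A) (ε := 1)
      (by push_cast at hbez ⊢; linarith) (Or.inl rfl) hu_eq rfl
  · rw [hu_eq, pd_comb]
    have : p * A - q * (-B) = 1 := by push_cast at hbez ⊢; linarith
    rw [this]
    simpa using hpd
/-! ### constants and the hexagonal lattice -/

lemma s3 : Real.sqrt 3 * Real.sqrt 3 = 3 := Real.mul_self_sqrt (by norm_num)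
lemma s3pos : 0 < Real.sqrt 3 := Real.sqrt_pos.2 (by norm_num)
lemma c0_sq : c₀ ^ 2 = 2 / Real.sqrt 3 := Real.sq_sqrt (by positivity)
lemma c0_pos : 0 < c₀ := Real.sqrt_pos.2 (by positivity)

noncomputable def ω : ℂ := Complex.mk (1/2) (Real.sqrt 3 / 2)

lemma exp_pi3 : Complex.exp (↑Real.pi / 3 * Complex.I) = ω := by
  rw [show ((Real.pi : ℂ) / 3) = ((Real.pi / 3 : ℝ) : ℂ) by push_cast; ring]
  rw [Complex.exp_mul_I, ← Complex.ofReal_cos, ← Complex.ofReal_sin,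
    Real.cos_pi_div_three, Real.sin_pi_div_three]
  apply Complex.ext <;> simp [ω]

lemma mem_hexLattice {v : ℂ} :
    v ∈ hexLattice ↔ ∃ m n : ℤ, v = (m:ℂ) * (c₀:ℂ) + (n:ℂ) * ((c₀:ℂ) * ω) := by
  rw [hexLattice, ← exp_pi3]
  exact mem_latticeOf

lemma quad_ge_one {m n : ℤ} (h : ¬(m = 0 ∧ n = 0)) : 1 ≤ m^2 + m*n + n^2 := by
  have hX : 3 ≤ 4 * (m^2 + m*n + n^2) := by
    rcases eq_or_ne n 0 with hn | hn
    · subst hn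
      have hm : m ≠ 0 := by tauto
      have h1 : 1 ≤ |m| := Int.one_le_abs hm
      nlinarith [_root_.sq_abs m]
    · have h1 : 1 ≤ |n| := Int.one_le_abs hn
      nlinarith [sq_nonneg (2*m + n), _root_.sq_abs n]
  set X := m^2 + m*n + n^2 with hXdef
  clear_value X
  omega

lemma normSq_comb_omega (m n : ℤ) (c : ℝ) :
    normSq ((m:ℂ) * (c:ℂ) + (n:ℂ) * ((c:ℂ) * ω)) = c^2 * ((m:ℝ)^2 + (m:ℝ)*(n:ℝ) + (n:ℝ)^2) := by
  simp only [ω, normSq_apply, Complex.add_re, Complex.add_im, Complex.mul_re, Complex.mul_im,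
    Complex.intCast_re, Complex.intCast_im, Complex.ofReal_re, Complex.ofReal_im]
  linear_combination ((n:ℝ)^2 * c^2 / 4) * s3

lemma systole_hexLattice : systole hexLattice = c₀ := by
  have hmem : ((c₀ : ℝ) : ℂ) ∈ hexLattice := mem_hexLattice.2 ⟨1, 0, by simp⟩
  have h0 : ((c₀ : ℝ) : ℂ) ≠ 0 := by
    simp only [ne_eq, Complex.ofReal_eq_zero]
    exact c0_pos.ne'
  have hs := systole_eq_of_min hmem h0 ?_
  · rw [hs, Complex.norm_real, Real.norm_eq_abs, abs_of_pos c0_pos]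
  · intro w hw hw0
    obtain ⟨m, n, rfl⟩ := mem_hexLattice.1 hw
    have hmn : ¬(m = 0 ∧ n = 0) := by
      rintro ⟨rfl, rfl⟩; simp at hw0
    have hq : (1:ℝ) ≤ (m:ℝ)^2 + (m:ℝ)*(n:ℝ) + (n:ℝ)^2 := by
      have := quad_ge_one hmn
      exact_mod_cast this
    have h1 : normSq ((c₀:ℝ):ℂ) ≤ normSq ((m:ℂ) * (c₀:ℂ) + (n:ℂ) * ((c₀:ℂ) * ω)) := by
      rw [normSq_comb_omega, Complex.normSq_ofReal]
      nlinarith [c0_pos]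
    rw [norm_eq_sqrt, norm_eq_sqrt]
    exact Real.sqrt_le_sqrt h1

lemma systole_of_hexagonal {L : AddSubgroup ℂ} (h : IsHexagonal L) : systole L = c₀ := by
  obtain ⟨f, hf⟩ := h
  have hset : {r | ∃ v ∈ L, v ≠ 0 ∧ ‖v‖ = r} = {r | ∃ v ∈ hexLattice, v ≠ 0 ∧ ‖v‖ = r} := by
    ext r
    constructor
    · rintro ⟨v, hv, hv0, rfl⟩
      have : v ∈ f '' (hexLattice : Set ℂ) := hf ▸ hv
      obtain ⟨w, hw, rfl⟩ := this
      refine ⟨w, hw, ?_, (f.norm_map w).symm⟩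
      rintro rfl
      simp at hv0
    · rintro ⟨w, hw, hw0, rfl⟩
      refine ⟨f w, ?_, ?_, f.norm_map w⟩
      · have : f w ∈ f '' (hexLattice : Set ℂ) := ⟨w, hw, rfl⟩
        rw [← hf] at this
        exact this
      · intro hc
        apply hw0
        apply f.injective
        simpa using hc
  rw [systole, hset, ← systole]
  exact systole_hexLattice
/-! ### the equality case: identifying the hexagonal shape -/

lemma mk_eq (x y : ℝ) : Complex.mk x y = (x : ℂ) + (y : ℂ) * Complex.I := by
  apply Complex.ext <;> simp

lemma omega_eq : ω = ((1/2 : ℝ) : ℂ) + ((Real.sqrt 3 / 2 : ℝ) : ℂ) * Complex.I := by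
  rw [ω, mk_eq]

lemma omega_cases {u w₁ : ℂ} {N ε ε' : ℝ} (hN : N = 2 / Real.sqrt 3)
    (hε : ε = 1 ∨ ε = -1) (hε' : ε' = 1 ∨ ε' = -1)
    (hrec : (N:ℂ) * w₁ = u * Complex.mk (ε * (N/2)) ε') :
    ∃ c d : ℤ, (d = 1 ∨ d = -1) ∧ u * ω = (c:ℂ) * u + (d:ℂ) * w₁ := by
  have hNpos : 0 < N := by rw [hN]; positivity
  have hN0 : ((N:ℝ):ℂ) ≠ 0 := by
    simp only [ne_eq, Complex.ofReal_eq_zero]; exact hNpos.ne'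
  have hNs : N * (Real.sqrt 3 / 2) = 1 := by
    rw [hN]; field_simp
  have hNsC : ((N:ℝ):ℂ) * ((Real.sqrt 3 : ℝ) : ℂ) / 2 = 1 := by
    rw [show ((N:ℝ):ℂ) * ((Real.sqrt 3 : ℝ):ℂ) / 2 = (((N * (Real.sqrt 3/2) : ℝ)) : ℂ) by
      push_cast; ring, hNs, Complex.ofReal_one]
  have hz : w₁ = u * (((ε/2 : ℝ) : ℂ) + ((ε' * (Real.sqrt 3 / 2) : ℝ) : ℂ) * Complex.I) := by
    apply mul_left_cancel₀ hN0
    rw [hrec, mk_eq]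
    push_cast
    linear_combination (-1 : ℂ) * u * Complex.I * (ε' : ℂ) * hNsC
  rcases hε with rfl | rfl <;> rcases hε' with rfl | rfl
  · exact ⟨0, 1, Or.inl rfl, by rw [hz, omega_eq]; push_cast; ring⟩
  · exact ⟨1, -1, Or.inr rfl, by rw [hz, omega_eq]; push_cast; ring⟩
  · exact ⟨1, 1, Or.inl rfl, by rw [hz, omega_eq]; push_cast; ring⟩
  · exact ⟨0, -1, Or.inr rfl, by rw [hz, omega_eq]; push_cast; ring⟩
/-! ### main argument -/

lemma main_ineq (a b : ℂ) (hcov : covol a b = 1) :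
    systole (latticeOf a b) ≤ c₀ ∧
      (systole (latticeOf a b) = c₀ → IsHexagonal (latticeOf a b)) := by
  have hpd : |pd a b| = 1 := by rw [← covol_eq]; exact hcov
  obtain ⟨u, huL, hu0, humin⟩ := exists_min_vec hpd
  obtain ⟨w, hwL, hbasis, hpduw⟩ := exists_basis_with_min hpd huL hu0 humin
  have hsys : systole (latticeOf a b) = ‖u‖ := systole_eq_of_min huL hu0 humin
  set L := latticeOf a b with hL
  set N := normSq u with hNdef
  have hNpos : 0 < N := Complex.normSq_pos.2 hu0
  set k : ℤ := round (pp u w / N) with hk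
  set w₁ : ℂ := w - (k:ℂ) * u with hw₁def
  have hw₁L : w₁ ∈ L := by
    have hzs : (k:ℂ) * u = k • u := (zsmul_eq_mul u k).symm
    rw [hw₁def, hzs]
    exact sub_mem hwL (zsmul_mem huL k)
  have hppw₁ : |pp u w₁| ≤ N / 2 := by
    rw [hw₁def, pp_sub_int]
    have h1 : |pp u w / N - (k:ℝ)| ≤ 1/2 := abs_sub_round _
    have h2 : pp u w - (k:ℝ) * N = N * (pp u w / N - k) := by field_simp
    rw [h2, abs_mul, abs_of_pos hNpos]
    nlinarith [abs_nonneg (pp u w / N - (k:ℝ))]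
  have hpdw₁ : |pd u w₁| = 1 := by rw [hw₁def, pd_sub_int]; exact hpduw
  have hw₁0 : w₁ ≠ 0 := by
    intro h; rw [h] at hpdw₁; simp [pd] at hpdw₁
  have hNle : N ≤ normSq w₁ := by
    have h1 := humin w₁ hw₁L hw₁0
    have h2 : ‖u‖^2 ≤ ‖w₁‖^2 := by nlinarith [norm_nonneg u]
    rwa [norm_sq_eq, norm_sq_eq] at h2
  have hpdsq : pd u w₁ ^ 2 = 1 := by
    rw [← _root_.sq_abs, hpdw₁]; norm_num
  have hkey : 1 = N * normSq w₁ - pp u w₁ ^ 2 := by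
    have h1 := pp_sq_add_pd_sq u w₁
    linarith
  have hppsq : pp u w₁ ^ 2 ≤ N^2 / 4 := by
    nlinarith [_root_.sq_abs (pp u w₁), abs_nonneg (pp u w₁)]
  have hN2 : N^2 ≤ 4/3 := by nlinarith
  have h4 : (2 / Real.sqrt 3)^2 = 4/3 := by
    rw [div_pow, sq, sq, s3]; norm_num
  have hNle2 : N ≤ 2 / Real.sqrt 3 := by
    have h5 := Real.sqrt_le_sqrt (show N^2 ≤ (2 / Real.sqrt 3)^2 by rw [h4]; exact hN2)
    rwa [Real.sqrt_sq hNpos.le, Real.sqrt_sq (by positivity)] at h5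
  constructor
  · rw [hsys, norm_eq_sqrt, ← hNdef]
    calc Real.sqrt N ≤ Real.sqrt (c₀^2) := Real.sqrt_le_sqrt (by rw [c0_sq]; exact hNle2)
    _ = c₀ := Real.sqrt_sq c0_pos.le
  · intro heq
    have hnormu : ‖u‖ = c₀ := by rw [← hsys]; exact heq
    have hNval : N = 2 / Real.sqrt 3 := by
      rw [hNdef, ← norm_sq_eq, hnormu, c0_sq]
    have hN2eq : N^2 = 4/3 := by rw [hNval, h4]
    -- equalities are forced
    have hWle : normSq w₁ ≤ N := by nlinarith
    have hW : normSq w₁ = N := le_antisymm hWle hNle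
    have hpp2 : pp u w₁ ^ 2 = N^2/4 := by
      rw [hW] at hkey; nlinarith
    have hppcases : pp u w₁ = 1 * (N/2) ∨ pp u w₁ = -1 * (N/2) := by
      have hfac : (pp u w₁ - N/2) * (pp u w₁ + N/2) = 0 := by nlinarith
      rcases mul_eq_zero.1 hfac with h | h
      · exact Or.inl (by linarith)
      · exact Or.inr (by linarith)
    have hpdcases : pd u w₁ = 1 ∨ pd u w₁ = -1 := (abs_eq (by norm_num)).1 hpdw₁
    -- reconstruct w₁
    have hrec := recon u w₁
    rw [← hNdef] at hrec
    have hεdata : ∃ ε ε' : ℝ, (ε = 1 ∨ ε = -1) ∧ (ε' = 1 ∨ ε' = -1) ∧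
        (N:ℂ) * w₁ = u * Complex.mk (ε * (N/2)) ε' := by
      rcases hppcases with h | h <;> rcases hpdcases with h' | h'
      · exact ⟨1, 1, Or.inl rfl, Or.inl rfl, by rw [hrec, h, h']⟩
      · exact ⟨1, -1, Or.inl rfl, Or.inr rfl, by rw [hrec, h, h']⟩
      · exact ⟨-1, 1, Or.inr rfl, Or.inl rfl, by rw [hrec, h, h']⟩
      · exact ⟨-1, -1, Or.inr rfl, Or.inr rfl, by rw [hrec, h, h']⟩
    obtain ⟨ε, ε', hε, hε', hrec'⟩ := hεdata
    obtain ⟨c, d, hd, hcd⟩ := omega_cases hNval hε hε' hrec'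
    -- bases
    have hbasis₂ : IsZBasis L u w₁ := by
      refine hbasis.change (p := 1) (q := 0) (r := -k) (s := 1) (ε := 1) (by ring)
        (Or.inl rfl) (by push_cast; ring) ?_
      rw [hw₁def]; push_cast; ring
    have hbasis₃ : IsZBasis L u (u * ω) := by
      refine hbasis₂.change (p := 1) (q := 0) (r := c) (s := d) (ε := d) (by ring) hd
        (by push_cast; ring) hcd
    -- the isometry
    have hc0C : ((c₀ : ℝ) : ℂ) ≠ 0 := by
      simp only [ne_eq, Complex.ofReal_eq_zero]; exact c0_pos.ne'
    have hnormz : ‖u / ((c₀:ℝ):ℂ)‖ = 1 := by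
      rw [norm_div, hnormu, Complex.norm_real, Real.norm_eq_abs, abs_of_pos c0_pos,
        div_self c0_pos.ne']
    refine ⟨rotation ⟨u / ((c₀:ℝ):ℂ), mem_sphere_zero_iff_norm.2 hnormz⟩, ?_⟩
    ext x
    simp only [SetLike.mem_coe, Set.mem_image, rotation_apply]
    constructor
    · intro hx
      obtain ⟨m, n, rfl⟩ := (hbasis₃ x).1 hx
      refine ⟨(m:ℂ) * ((c₀:ℝ):ℂ) + (n:ℂ) * (((c₀:ℝ):ℂ) * ω),
        mem_hexLattice.2 ⟨m, n, rfl⟩, ?_⟩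
      have hdiv : u / ((c₀:ℝ):ℂ) * ((c₀:ℝ):ℂ) = u := div_mul_cancel₀ u hc0C
      show u / ((c₀:ℝ):ℂ) * ((m:ℂ) * ((c₀:ℝ):ℂ) + (n:ℂ) * (((c₀:ℝ):ℂ) * ω)) =
        (m:ℂ) * u + (n:ℂ) * (u * ω)
      linear_combination ((m:ℂ) + (n:ℂ) * ω) * hdiv
    · rintro ⟨y, hy, rfl⟩
      obtain ⟨m, n, rfl⟩ := mem_hexLattice.1 hy
      apply (hbasis₃ _).2
      refine ⟨m, n, ?_⟩
      have hdiv : u / ((c₀:ℝ):ℂ) * ((c₀:ℝ):ℂ) = u := div_mul_cancel₀ u hc0C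
      show u / ((c₀:ℝ):ℂ) * ((m:ℂ) * ((c₀:ℝ):ℂ) + (n:ℂ) * (((c₀:ℝ):ℂ) * ω)) =
        (m:ℂ) * u + (n:ℂ) * (u * ω)
      linear_combination ((m:ℂ) + (n:ℂ) * ω) * hdiv

/-- Every covolume-1 lattice in ℝ² has systole at most (2/√3)^{1/2}, with
equality if and only if it is the image of the rescaled hexagonal lattice
under an isometry of ℝ². -/
theorem systole_le_hexagonal (a b : ℂ) (hcov : covol a b = 1) :
    systole (latticeOf a b) ≤ c₀ ∧
      (systole (latticeOf a b) = c₀ ↔ IsHexagonal (latticeOf a b)) := by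
  obtain ⟨h1, h2⟩ := main_ineq a b hcov
  exact ⟨h1, ⟨h2, fun h => systole_of_hexagonal h⟩⟩
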